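/- Let n > 1 and let S be a finite subset of ℝ^n. For any integer degree d with 1 < d ≤ n, the number of distinct functions f : S → {-1,1} of the form f(x) = sgn(p(x)), where p is a real polynomial in n variables of total degree at most d with no zeros on S, is at most 2 · binom(|S|−1, ≤ m−1), where m = binom(n+d, d) is the number of monomials of degree at most d in n variables (including the constant term). -/

import Mathlib

open Function

private lemma pos_of_sign_eq_one {r : ℝ} (h : Real.sign r = 1) : 0 < r := by
  rcases lt_trichotomy r 0 with h' | h' | h'
  · rw [Real.sign_of_neg h'] at h; norm_num at h
  · rw [h', Real.sign_zero] at h; norm_num at h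
  · exact h'

private lemma neg_of_sign_eq_neg_one {r : ℝ} (h : Real.sign r = -1) : r < 0 := by
  rcases lt_trichotomy r 0 with h' | h' | h'
  · exact h'
  · rw [h', Real.sign_zero] at h; norm_num at h
  · rw [Real.sign_of_pos h'] at h; norm_num at h

private lemma sign_combo {a b y z : ℝ} (ha : 0 < a) (hb : 0 < b) (hy : y ≠ 0) (hz : z ≠ 0)
    (h : Real.sign y = Real.sign z) :
    a * y + b * z ≠ 0 ∧ Real.sign (a * y + b * z) = Real.sign y := by
  rcases hy.lt_or_gt with hy' | hy'
  · have hz' : z < 0 := neg_of_sign_eq_neg_one (h ▸ Real.sign_of_neg hy' ▸ rfl)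
    have hlt : a * y + b * z < 0 := by nlinarith
    exact ⟨hlt.ne, by rw [Real.sign_of_neg hlt, Real.sign_of_neg hy']⟩
  · have hz' : 0 < z := pos_of_sign_eq_one (h ▸ Real.sign_of_pos hy' ▸ rfl)
    have hlt : 0 < a * y + b * z := by nlinarith
    exact ⟨hlt.ne', by rw [Real.sign_of_pos hlt, Real.sign_of_pos hy']⟩

section Pat

variable {V : Type*} [AddCommGroup V] [Module ℝ V] {X : Type*}

/-- sign patterns on `T` realizable by `W` through the functionals `e`. -/
def pat (e : X → V →ₗ[ℝ] ℝ) (W : Submodule ℝ V) (T : Finset X) : Set (X → ℝ) :=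
  {f | (∀ x ∉ T, f x = 0) ∧ ∃ v ∈ W, ∀ x ∈ T, e x v ≠ 0 ∧ f x = Real.sign (e x v)}

lemma pat_vals {e : X → V →ₗ[ℝ] ℝ} {W : Submodule ℝ V} {T : Finset X} {f : X → ℝ}
    (hf : f ∈ pat e W T) {x : X} (hx : x ∈ T) : f x = 1 ∨ f x = -1 := by
  obtain ⟨-, v, -, hv⟩ := hf
  obtain ⟨h1, h2⟩ := hv x hx
  rcases Real.sign_apply_eq_of_ne_zero _ h1 with h | h
  · exact Or.inr (h2.trans h)
  · exact Or.inl (h2.trans h)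

lemma pat_finite (e : X → V →ₗ[ℝ] ℝ) (W : Submodule ℝ V) (T : Finset X) :
    (pat e W T).Finite := by
  classical
  apply Set.Finite.of_finite_image (f := fun (f : X → ℝ) (x : {x // x ∈ T}) => f x.val = 1)
  · exact Set.toFinite _
  · intro f hf g hg hfg
    funext x
    by_cases hx : x ∈ T
    · have hx' := congrFun hfg ⟨x, hx⟩
      simp only [eq_iff_iff] at hx'
      rcases pat_vals hf hx with h1 | h1 <;> rcases pat_vals hg hx with h2 | h2 <;>
        simp_all
    · rw [hf.1 x hx, hg.1 x hx]

end Pat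

private lemma sum_choose_pascal (k m : ℕ) :
    ∑ i ∈ Finset.range (m + 1), (k + 1).choose i
      = ∑ i ∈ Finset.range (m + 1), k.choose i + ∑ i ∈ Finset.range m, k.choose i := by
  induction m with
  | zero => simp
  | succ m ihm =>
      have h1 : ∑ i ∈ Finset.range (m + 1 + 1), (k + 1).choose i
          = (∑ i ∈ Finset.range (m + 1), (k + 1).choose i) + (k + 1).choose (m + 1) :=
        Finset.sum_range_succ _ _
      have h2 : ∑ i ∈ Finset.range (m + 1 + 1), k.choose i
          = (∑ i ∈ Finset.range (m + 1), k.choose i) + k.choose (m + 1) :=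
        Finset.sum_range_succ _ _
      have h3 : ∑ i ∈ Finset.range (m + 1), k.choose i
          = (∑ i ∈ Finset.range m, k.choose i) + k.choose m :=
        Finset.sum_range_succ _ _
      have h4 : (k + 1).choose (m + 1) = k.choose m + k.choose (m + 1) :=
        Nat.choose_succ_succ k m
      omega

section Core

variable {V : Type*} [AddCommGroup V] [Module ℝ V] {X : Type*}

lemma pat_ncard_le (e : X → V →ₗ[ℝ] ℝ) :
    ∀ (N : ℕ) (T : Finset X), T.card = N → T.Nonempty → ∀ (W : Submodule ℝ V),
      FiniteDimensional ℝ W → ∀ m : ℕ, Module.finrank ℝ W ≤ m →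
      (pat e W T).ncard ≤ 2 * ∑ i ∈ Finset.range m, (T.card - 1).choose i := by
  classical
  intro N
  induction N using Nat.strong_induction_on with
  | _ N ih =>
  intro T hTN hT W hWfd m hm
  haveI := hWfd
  obtain ⟨x₀, hx₀T⟩ := hT
  by_cases hex : ∃ v ∈ W, e x₀ v ≠ 0
  swap
  · -- no admissible witness: pat is empty
    push_neg at hex
    have hempty : pat e W T = ∅ := by
      ext f
      simp only [Set.mem_empty_iff_false, iff_false]
      rintro ⟨-, v, hvW, hv⟩
      exact (hv x₀ hx₀T).1 (hex v hvW)
    simp [hempty]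
  obtain ⟨v₀, hv₀W, hv₀⟩ := hex
  have hW1 : 1 ≤ Module.finrank ℝ W := by
    rw [Nat.one_le_iff_ne_zero]
    intro h0
    rw [Submodule.finrank_eq_zero] at h0
    rw [h0, Submodule.mem_bot] at hv₀W
    rw [hv₀W] at hv₀
    exact hv₀ (map_zero _)
  have hm1 : 1 ≤ m := hW1.trans hm
  set W' : Submodule ℝ V := W ⊓ LinearMap.ker (e x₀) with hW'def
  have hfdW' : FiniteDimensional ℝ W' := Submodule.finiteDimensional_of_le inf_le_left
  haveI := hfdW'
  have hW'lt : W' < W := by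
    refine lt_of_le_of_ne inf_le_left (fun h => ?_)
    have : v₀ ∈ W' := h ▸ hv₀W
    exact hv₀ ((Submodule.mem_inf.mp this).2)
  have hW'rk : Module.finrank ℝ W' ≤ m - 1 :=
    Nat.le_sub_one_of_lt (lt_of_lt_of_le (Submodule.finrank_lt_finrank_of_lt hW'lt) hm)
  set T' : Finset X := T.erase x₀ with hT'def
  have hT'card : T'.card = T.card - 1 := Finset.card_erase_of_mem hx₀T
  -- restriction lemmas
  have key1 : ∀ f ∈ pat e W T, Function.update f x₀ 0 ∈ pat e W T' := by
    rintro f ⟨hf0, v, hvW, hv⟩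
    refine ⟨?_, v, hvW, ?_⟩
    · intro x hx
      by_cases hxx : x = x₀
      · subst hxx; simp
      · rw [Function.update_of_ne hxx]
        exact hf0 x fun hxT => hx (Finset.mem_erase.mpr ⟨hxx, hxT⟩)
    · intro x hx
      obtain ⟨hxne, hxT⟩ := Finset.mem_erase.mp hx
      rw [Function.update_of_ne hxne]
      exact hv x hxT
  have key2 : ∀ f ∈ pat e W T, f x₀ = -1 → Function.update f x₀ 1 ∈ pat e W T →
      Function.update f x₀ 0 ∈ pat e W' T' := by
    rintro f ⟨hf0, vm, hvmW, hvm⟩ hfneg ⟨-, vp, hvpW, hvp⟩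
    have hxm := hvm x₀ hx₀T
    have hxp := hvp x₀ hx₀T
    have hb : e x₀ vm < 0 := by
      apply neg_of_sign_eq_neg_one
      rw [← hxm.2, hfneg]
    have ha : 0 < e x₀ vp := by
      apply pos_of_sign_eq_one
      rw [← hxp.2, Function.update_self]
    set v : V := (e x₀ vp) • vm + (-(e x₀ vm)) • vp with hvdef
    have hvW' : v ∈ W' := by
      refine Submodule.mem_inf.mpr ⟨?_, ?_⟩
      · exact Submodule.add_mem _ (Submodule.smul_mem _ _ hvmW) (Submodule.smul_mem _ _ hvpW)
      · rw [LinearMap.mem_ker, hvdef, map_add, map_smul, map_smul, smul_eq_mul, smul_eq_mul]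
        ring
    refine ⟨?_, v, hvW', ?_⟩
    · intro x hx
      by_cases hxx : x = x₀
      · subst hxx; simp
      · rw [Function.update_of_ne hxx]
        exact hf0 x fun hxT => hx (Finset.mem_erase.mpr ⟨hxx, hxT⟩)
    · intro x hx
      obtain ⟨hxne, hxT⟩ := Finset.mem_erase.mp hx
      have h1 := hvm x hxT
      have h2 := hvp x hxT
      rw [Function.update_of_ne hxne] at h2
      have hsg : Real.sign (e x vm) = Real.sign (e x vp) := by
        rw [← h1.2, ← h2.2]
      have hev : e x v = (e x₀ vp) * (e x vm) + (-(e x₀ vm)) * (e x vp) := by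
        rw [hvdef, map_add, map_smul, map_smul, smul_eq_mul, smul_eq_mul]
      obtain ⟨hne, hsgn⟩ := sign_combo ha (neg_pos.mpr hb) h1.1 h2.1 hsg
      rw [Function.update_of_ne hxne, hev]
      exact ⟨hne, by rw [hsgn, ← h1.2]⟩
  by_cases hT' : T'.Nonempty
  · -- main inductive case
    have hN2 : 2 ≤ T.card := by
      have := Finset.card_pos.mpr hT'
      omega
    set F : (X → ℝ) → ((X → ℝ) ⊕ (X → ℝ)) := fun f =>
      if f x₀ = -1 ∧ Function.update f x₀ 1 ∈ pat e W T then Sum.inr (Function.update f x₀ 0)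
      else Sum.inl (Function.update f x₀ 0) with hFdef
    have hinj : Set.InjOn F (pat e W T) := by
      intro f hf g hg hFfg
      by_cases hfc : f x₀ = -1 ∧ Function.update f x₀ 1 ∈ pat e W T <;>
        by_cases hgc : g x₀ = -1 ∧ Function.update g x₀ 1 ∈ pat e W T
      · rw [hFdef] at hFfg
        simp only [if_pos hfc, if_pos hgc, Sum.inr.injEq] at hFfg
        funext x
        by_cases hxx : x = x₀
        · subst hxx; rw [hfc.1, hgc.1]
        · have := congrFun hFfg x
          rwa [Function.update_of_ne hxx, Function.update_of_ne hxx] at this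
      · rw [hFdef] at hFfg; simp only [if_pos hfc, if_neg hgc] at hFfg
        exact absurd hFfg (by simp)
      · rw [hFdef] at hFfg; simp only [if_neg hfc, if_pos hgc] at hFfg
        exact absurd hFfg (by simp)
      · rw [hFdef] at hFfg
        simp only [if_neg hfc, if_neg hgc, Sum.inl.injEq] at hFfg
        have hrest : ∀ x, x ≠ x₀ → f x = g x := by
          intro x hxx
          have := congrFun hFfg x
          rwa [Function.update_of_ne hxx, Function.update_of_ne hxx] at this
        funext x
        by_cases hxx : x = x₀
        swap
        · exact hrest x hxx
        rw [hxx]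
        rcases pat_vals hf hx₀T with h1 | h1 <;> rcases pat_vals hg hx₀T with h2 | h2
        · rw [h1, h2]
        · -- f x₀ = 1, g x₀ = -1 : contradiction with hgc
          exfalso
          apply hgc
          refine ⟨h2, ?_⟩
          have : Function.update g x₀ 1 = f := by
            funext y
            by_cases hyy : y = x₀
            · subst hyy; rw [Function.update_self, h1]
            · rw [Function.update_of_ne hyy]; exact (hrest y hyy).symm
          rw [this]; exact hf
        · exfalso
          apply hfc
          refine ⟨h1, ?_⟩
          have : Function.update f x₀ 1 = g := by
            funext y
            by_cases hyy : y = x₀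
            · subst hyy; rw [Function.update_self, h2]
            · rw [Function.update_of_ne hyy]; exact hrest y hyy
          rw [this]; exact hg
        · rw [h1, h2]
    have himg : F '' (pat e W T) ⊆ (Sum.inl '' pat e W T') ∪ (Sum.inr '' pat e W' T') := by
      rintro - ⟨f, hf, rfl⟩
      by_cases hfc : f x₀ = -1 ∧ Function.update f x₀ 1 ∈ pat e W T
      · refine Or.inr ⟨Function.update f x₀ 0, key2 f hf hfc.1 hfc.2, ?_⟩
        rw [hFdef]; simp only [if_pos hfc]
      · refine Or.inl ⟨Function.update f x₀ 0, key1 f hf, ?_⟩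
        rw [hFdef]; simp only [if_neg hfc]
    have hDfin : (pat e W T').Finite := pat_finite e W T'
    have hD'fin : (pat e W' T').Finite := pat_finite e W' T'
    have hstep : (pat e W T).ncard ≤ (pat e W T').ncard + (pat e W' T').ncard := by
      calc (pat e W T).ncard = (F '' pat e W T).ncard :=
            (Set.ncard_image_of_injOn hinj).symm
        _ ≤ ((Sum.inl '' pat e W T') ∪ (Sum.inr '' pat e W' T')).ncard :=
            Set.ncard_le_ncard himg ((hDfin.image _).union (hD'fin.image _))
        _ ≤ (Sum.inl '' pat e W T').ncard + (Sum.inr '' pat e W' T').ncard := Set.ncard_union_le _ _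
        _ = (pat e W T').ncard + (pat e W' T').ncard := by
            rw [Set.ncard_image_of_injective _ Sum.inl_injective,
              Set.ncard_image_of_injective _ Sum.inr_injective]
    have hNpos : 1 ≤ N := by omega
    have ihD := ih (N - 1) (by omega) T' (by omega) hT' W hWfd m hm
    have ihD' := ih (N - 1) (by omega) T' (by omega) hT' W' hfdW' (m - 1) hW'rk
    -- arithmetic
    obtain ⟨m', rfl⟩ : ∃ m', m = m' + 1 := ⟨m - 1, by omega⟩
    have hTc : T.card - 1 = (T'.card - 1) + 1 := by omega
    rw [hTc, sum_choose_pascal]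
    have : m' + 1 - 1 = m' := by omega
    rw [this] at ihD'
    omega
  · -- T = {x₀}
    have hsing : T = {x₀} := by
      rcases Finset.eq_empty_or_nonempty (T.erase x₀) with h | h
      · rcases (Finset.erase_eq_empty_iff T x₀).mp h with h' | h'
        · exact absurd hx₀T (h' ▸ Finset.notMem_empty x₀)
        · exact h'
      · exact absurd h hT'
    have hsub : pat e W T ⊆ {(fun x => if x = x₀ then (1:ℝ) else 0),
        (fun x => if x = x₀ then (-1:ℝ) else 0)} := by
      intro f hf
      rcases pat_vals hf hx₀T with h1 | h1
      · left
        funext x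
        by_cases hxx : x = x₀
        · subst hxx; simp [h1]
        · simp only [if_neg hxx]
          exact hf.1 x (by rw [hsing]; simp [hxx])
      · right
        funext x
        by_cases hxx : x = x₀
        · subst hxx; simp [h1]
        · simp only [if_neg hxx]
          exact hf.1 x (by rw [hsing]; simp [hxx])
    have hle2 : (pat e W T).ncard ≤ 2 := by
      refine le_trans (Set.ncard_le_ncard hsub (Set.toFinite _)) ?_
      refine le_trans (Set.ncard_insert_le _ _) ?_
      simp [Set.ncard_singleton]
    have hcard1 : T.card = 1 := by rw [hsing]; simp
    have hsum : ∑ i ∈ Finset.range m, (T.card - 1).choose i = 1 := by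
      rw [hcard1]
      rw [Finset.sum_eq_single_of_mem 0 (Finset.mem_range.mpr hm1)]
      · simp
      · intro i _ hi
        exact Nat.choose_eq_zero_of_lt (by omega)
    rw [hsum]
    omega

end Core

private lemma finrank_rtd_le (n d : ℕ) :
    Module.finrank ℝ (MvPolynomial.restrictTotalDegree (Fin n) ℝ d) ≤ (n + d).choose d := by
  classical
  set s : Set (Fin n →₀ ℕ) := {t | (t.sum fun _ e => e) ≤ d} with hs
  let B : Module.Basis s ℝ (MvPolynomial.restrictSupport ℝ s) := MvPolynomial.basisRestrictSupport ℝ s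
  let φ : s → Sym (Fin (n + 1)) d := fun t =>
    ⟨Multiset.map Fin.castSucc (Finsupp.toMultiset t.1)
      + Multiset.replicate (d - Multiset.card (Finsupp.toMultiset t.1)) (Fin.last n), by
        have hc : Multiset.card (Finsupp.toMultiset t.1) ≤ d := by
          rw [Finsupp.card_toMultiset]; exact t.2
        simp only [Multiset.card_add, Multiset.card_map, Multiset.card_replicate]
        omega⟩
  have hφ : Function.Injective φ := by
    intro t u h
    apply Subtype.ext
    ext a
    have h' := congrArg (fun (u : Sym (Fin (n + 1)) d) => Multiset.count (Fin.castSucc a) u.1) h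
    simpa [φ, Multiset.count_replicate, (Fin.castSucc_lt_last a).ne,
      (Fin.castSucc_lt_last a).ne',
      Multiset.count_map_eq_count' _ _ (Fin.castSucc_injective n),
      Finsupp.count_toMultiset] using h'
  haveI : Finite s := Finite.of_injective φ hφ
  haveI : Fintype s := Fintype.ofFinite _
  have h1 : Module.finrank ℝ (MvPolynomial.restrictSupport ℝ s) = Fintype.card s :=
    Module.finrank_eq_card_basis B
  have h2 : Fintype.card s ≤ Fintype.card (Sym (Fin (n + 1)) d) :=
    Fintype.card_le_of_injective φ hφ
  have h3 : Fintype.card (Sym (Fin (n + 1)) d) = (n + d).choose d := by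
    rw [Sym.card_sym_eq_choose, Fintype.card_fin]
    congr 1
    omega
  show Module.finrank ℝ (MvPolynomial.restrictSupport ℝ s) ≤ (n + d).choose d
  omega

theorem polynomial_set_capacity (n d : ℕ) (hn : 1 < n) (hd : 1 < d) (hdn : d ≤ n)
    (S : Set (Fin n → ℝ)) (hfin : S.Finite) :
    Nat.card {f : S → ℝ // ∃ p : MvPolynomial (Fin n) ℝ, p.totalDegree ≤ d ∧
        ∀ x : S, MvPolynomial.eval (x : Fin n → ℝ) p ≠ 0 ∧
          f x = Real.sign (MvPolynomial.eval (x : Fin n → ℝ) p)} ≤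
      2 * ∑ i ∈ Finset.range ((n + d).choose d), (S.ncard - 1).choose i := by
  classical
  set m : ℕ := (n + d).choose d with hmdef
  have hm1 : 1 ≤ m := Nat.choose_pos (Nat.le_add_left d n)
  have hsum1 : 1 ≤ ∑ i ∈ Finset.range m, (S.ncard - 1).choose i := by
    calc 1 = (S.ncard - 1).choose 0 := (Nat.choose_zero_right _).symm
      _ ≤ ∑ i ∈ Finset.range m, (S.ncard - 1).choose i :=
        Finset.single_le_sum (fun i _ => Nat.zero_le _) (Finset.mem_range.mpr hm1)
  rcases S.eq_empty_or_nonempty with hS | hS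
  · -- S empty: at most one function
    haveI hempty : IsEmpty ↥S := by rw [hS]; exact Set.isEmpty_coe_sort.mpr rfl
    haveI hsub : Subsingleton {f : S → ℝ // ∃ p : MvPolynomial (Fin n) ℝ, p.totalDegree ≤ d ∧
        ∀ x : S, MvPolynomial.eval (x : Fin n → ℝ) p ≠ 0 ∧
          f x = Real.sign (MvPolynomial.eval (x : Fin n → ℝ) p)} := by
      constructor
      intro f g
      apply Subtype.ext
      funext x
      exact (IsEmpty.false x).elim
    have h2 : (1:ℕ) ≤ 2 * ∑ i ∈ Finset.range m, (S.ncard - 1).choose i := by omega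
    have hle := Nat.card_le_card_of_injective
      (α := {f : S → ℝ // ∃ p : MvPolynomial (Fin n) ℝ, p.totalDegree ≤ d ∧
        ∀ x : S, MvPolynomial.eval (x : Fin n → ℝ) p ≠ 0 ∧
          f x = Real.sign (MvPolynomial.eval (x : Fin n → ℝ) p)})
      (fun _ => (0 : Fin 1)) (fun a b _ => Subsingleton.elim a b)
    have h3 : Nat.card (Fin 1) = 1 := by simp
    exact (hle.trans_eq h3).trans h2
  · set W : Submodule ℝ (MvPolynomial (Fin n) ℝ) :=
      MvPolynomial.restrictTotalDegree (Fin n) ℝ d with hWdef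
    let e : (Fin n → ℝ) → (MvPolynomial (Fin n) ℝ) →ₗ[ℝ] ℝ := fun x =>
      { toFun := MvPolynomial.eval x
        map_add' := fun p q => by simp
        map_smul' := fun c p => by simp [MvPolynomial.smul_eval] }
    haveI hWfd : FiniteDimensional ℝ W := by
      rw [hWdef]; infer_instance
    set T : Finset (Fin n → ℝ) := hfin.toFinset with hTdef
    have hTne : T.Nonempty := hfin.toFinset_nonempty.mpr hS
    have hST : S.ncard = T.card := by
      rw [hTdef, Set.ncard_eq_toFinset_card S hfin]
    -- injection into pat
    have hΦmem : ∀ f : {f : S → ℝ // ∃ p : MvPolynomial (Fin n) ℝ, p.totalDegree ≤ d ∧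
        ∀ x : S, MvPolynomial.eval (x : Fin n → ℝ) p ≠ 0 ∧
          f x = Real.sign (MvPolynomial.eval (x : Fin n → ℝ) p)},
        (fun x => if h : x ∈ S then f.1 ⟨x, h⟩ else 0) ∈ pat e W T := by
      intro f
      obtain ⟨p, hdeg, hp⟩ := f.2
      refine ⟨?_, p, (MvPolynomial.mem_restrictTotalDegree _ _ _).mpr hdeg, ?_⟩
      · intro x hx
        have hxS : x ∉ S := by rwa [hTdef, hfin.mem_toFinset] at hx
        simp only [dif_neg hxS]
      · intro x hx
        have hxS : x ∈ S := by rwa [hTdef, hfin.mem_toFinset] at hx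
        obtain ⟨h1, h2⟩ := hp ⟨x, hxS⟩
        refine ⟨h1, ?_⟩
        simp only [dif_pos hxS]
        exact h2
    have hΦinj : Function.Injective (fun f : {f : S → ℝ // ∃ p : MvPolynomial (Fin n) ℝ,
        p.totalDegree ≤ d ∧ ∀ x : S, MvPolynomial.eval (x : Fin n → ℝ) p ≠ 0 ∧
          f x = Real.sign (MvPolynomial.eval (x : Fin n → ℝ) p)} =>
        (⟨fun x => if h : x ∈ S then f.1 ⟨x, h⟩ else 0, hΦmem f⟩ : pat e W T)) := by
      intro f g h
      apply Subtype.ext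
      funext x
      have := congrFun (congrArg Subtype.val h) x.1
      simpa [dif_pos x.2] using this
    haveI : Finite ↥(pat e W T) := (pat_finite e W T).to_subtype
    have hcard1 : Nat.card {f : S → ℝ // ∃ p : MvPolynomial (Fin n) ℝ, p.totalDegree ≤ d ∧
        ∀ x : S, MvPolynomial.eval (x : Fin n → ℝ) p ≠ 0 ∧
          f x = Real.sign (MvPolynomial.eval (x : Fin n → ℝ) p)} ≤ (pat e W T).ncard := by
      rw [← Nat.card_coe_set_eq]
      exact Nat.card_le_card_of_injective _ hΦinj
    have hrk : Module.finrank ℝ W ≤ m := finrank_rtd_le n d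
    have hmain := pat_ncard_le e T.card T rfl hTne W hWfd m hrk
    rw [hST]
    exact hcard1.trans hmain
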